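/- Let ℓ_u, ℓ_r : ℝ^n → ℝ be convex, differentiable and G-smooth, with |ℓ_r(θ)| ≤ B for all θ. Let D > 0, t ≥ 1, let λ_0, …, λ_t ∈ [0, D], let β_0, …, β_{t−1} ≥ 0 and ε_0, …, ε_{t−1} ≥ 0 satisfy |λ_{i+1} − λ_i| ≤ β_i (G L + ε_i) for i = 0, …, t−1, and let α > 0 satisfy α (1 + D) G ≤ 1. Define C_λ(θ) = ℓ_u(θ) + λ ℓ_r(θ) and let θ_0, …, θ_t ∈ ℝ^n satisfy θ_{i+1} = θ_i − α ∇C_{λ_i}(θ_i) for i = 0, …, t−1. Then for every θ* ∈ ℝ^n, Σ_{i=1}^{t} C_{λ_i}(θ_i) − Σ_{i=1}^{t} C_{λ_i}(θ*) ≤ B Σ_{i=0}^{t−1} β_i (G L + ε_i) + (1/(2α)) ‖θ_0 − θ*‖² + D B. -/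

import Mathlib

open scoped RealInnerProductSpace BigOperators

section helpers
variable {F : Type*} [NormedAddCommGroup F] [InnerProductSpace ℝ F] [CompleteSpace F]

lemma line_hasDerivAt (f : F → ℝ) (g : F → F) (hg : ∀ x, HasGradientAt f (g x) x)
    (x v : F) (s : ℝ) :
    HasDerivAt (fun s : ℝ => f (x + s • v)) ⟪g (x + s • v), v⟫ s := by
  have h1 : HasDerivAt (fun s : ℝ => x + s • v) v s := by
    simpa using ((hasDerivAt_id s).smul_const v).const_add x
  have h2 := (hg (x + s • v)).hasFDerivAt.comp_hasDerivAt s h1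
  simp [InnerProductSpace.toDual_apply_apply] at h2
  exact h2

lemma convex_grad_lower (f : F → ℝ) (g : F → F) (hc : ConvexOn ℝ Set.univ f)
    (hg : ∀ x, HasGradientAt f (g x) x) (x y : F) :
    f x + ⟪g x, y - x⟫ ≤ f y := by
  set v := y - x with hv
  set φ : ℝ → ℝ := fun s => f (x + s • v) with hφ
  have hslope : ∀ s : ℝ, s ∈ Set.Ioc (0:ℝ) 1 → slope φ 0 s ≤ f y - f x := by
    intro s hs
    have hconv := hc.2 (Set.mem_univ x) (Set.mem_univ y) (by linarith [hs.1, hs.2] : (0:ℝ) ≤ 1 - s)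
      (le_of_lt hs.1) (by ring)
    have hpt : (1 - s) • x + s • y = x + s • v := by
      simp only [hv]; module
    rw [hpt] at hconv
    have h1 : φ s ≤ (1 - s) * f x + s * f y := by simpa [φ, smul_eq_mul] using hconv
    have hφ0 : φ 0 = f x := by simp [φ]
    rw [slope_def_field, hφ0]
    rw [div_le_iff₀ (by linarith [hs.1] : (0:ℝ) < s - 0)]
    nlinarith [hs.1]
  have hd : HasDerivAt φ ⟪g x, v⟫ 0 := by
    have := line_hasDerivAt f g hg x v 0
    simpa using this
  have htends : Filter.Tendsto (slope φ 0) (nhdsWithin 0 (Set.Ioi 0)) (nhds ⟪g x, v⟫) := by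
    have := hasDerivAt_iff_tendsto_slope.1 hd
    exact this.mono_left (nhdsWithin_mono 0 (fun a ha => ne_of_gt ha))
  have hle : ⟪g x, v⟫ ≤ f y - f x := by
    refine le_of_tendsto htends ?_
    filter_upwards [Ioc_mem_nhdsGT_of_mem (by norm_num : (0:ℝ) ∈ Set.Ico (0:ℝ) 1)] with s hs
    exact hslope s hs
  linarith [hle]

lemma smooth_upper (f : F → ℝ) (g : F → F) (C : ℝ)
    (hg : ∀ x, HasGradientAt f (g x) x)
    (hL : ∀ a b, ‖g a - g b‖ ≤ C * ‖a - b‖) (x y : F) :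
    f y ≤ f x + ⟪g x, y - x⟫ + C / 2 * ‖y - x‖ ^ 2 := by
  set v := y - x with hv
  set ψ : ℝ → ℝ := fun s => f (x + s • v) - s * ⟪g x, v⟫ - C * ‖v‖ ^ 2 * s ^ 2 / 2 with hψ
  have hd : ∀ s : ℝ, HasDerivAt ψ (⟪g (x + s • v), v⟫ - ⟪g x, v⟫ - C * ‖v‖ ^ 2 * s) s := by
    intro s
    have h1 := line_hasDerivAt f g hg x v s
    have h2 : HasDerivAt (fun s : ℝ => s * ⟪g x, v⟫) ⟪g x, v⟫ s := by
      simpa using (hasDerivAt_id s).mul_const ⟪g x, v⟫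
    have h3 : HasDerivAt (fun s : ℝ => C * ‖v‖ ^ 2 * s ^ 2 / 2) (C * ‖v‖ ^ 2 * s) s := by
      have := ((hasDerivAt_pow 2 s).const_mul (C * ‖v‖ ^ 2)).div_const 2
      exact this.congr_deriv (by norm_num <;> ring)
    exact (h1.sub h2).sub h3
  have hmono : ψ 1 ≤ ψ 0 := by
    have hcont : ContinuousOn ψ (Set.Icc 0 1) := fun s _ => (hd s).continuousAt.continuousWithinAt
    have hderiv : ∀ s ∈ interior (Set.Icc (0:ℝ) 1), deriv ψ s ≤ 0 := by
      intro s hs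
      rw [interior_Icc] at hs
      rw [(hd s).deriv]
      have hb : ⟪g (x + s • v) - g x, v⟫ ≤ ‖g (x + s • v) - g x‖ * ‖v‖ :=
        real_inner_le_norm _ _
      have hb2 : ‖g (x + s • v) - g x‖ ≤ C * (s * ‖v‖) := by
        have := hL (x + s • v) x
        simpa [norm_smul, abs_of_pos hs.1, mul_assoc] using this
      have hin : ⟪g (x + s • v), v⟫ - ⟪g x, v⟫ = ⟪g (x + s • v) - g x, v⟫ := by
        rw [inner_sub_left]
      rw [hin]
      nlinarith [norm_nonneg v, hs.1, mul_le_mul_of_nonneg_right hb2 (norm_nonneg v)]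
    have := antitoneOn_of_deriv_nonpos (convex_Icc 0 1) hcont
      (fun s hs => (hd s).differentiableAt.differentiableWithinAt) hderiv
    exact this (by norm_num) (by norm_num) (by norm_num)
  have h0 : ψ 0 = f x := by simp [ψ]
  have h1 : ψ 1 = f y - ⟪g x, v⟫ - C * ‖v‖ ^ 2 / 2 := by
    simp [ψ, hv]
  rw [h0, h1] at hmono
  linarith

lemma step_bound (f : F → ℝ) (g : F → F) (C α : ℝ) (hα : 0 < α) (hC : C * α ≤ 1)
    (hc : ConvexOn ℝ Set.univ f) (hg : ∀ x, HasGradientAt f (g x) x)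
    (hL : ∀ a b, ‖g a - g b‖ ≤ C * ‖a - b‖) (x y z : F) (hy : y = x - α • g x) :
    f y - f z ≤ (1 / (2 * α)) * (‖x - z‖ ^ 2 - ‖y - z‖ ^ 2) := by
  have hconv := convex_grad_lower f g hc hg x z
  have hdesc := smooth_upper f g C hg hL x y
  have hyx : y - x = -(α • g x) := by rw [hy]; abel
  have hinn : ⟪g x, y - x⟫ = -(α * ‖g x‖ ^ 2) := by
    rw [hyx, inner_neg_right, real_inner_smul_right, real_inner_self_eq_norm_sq]
  have hnyx : ‖y - x‖ ^ 2 = α ^ 2 * ‖g x‖ ^ 2 := by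
    rw [hyx, norm_neg, norm_smul, mul_pow, Real.norm_eq_abs, sq_abs]
  have hnorm : ‖y - z‖ ^ 2 = ‖x - z‖ ^ 2 - 2 * α * ⟪g x, x - z⟫ + α ^ 2 * ‖g x‖ ^ 2 := by
    have hyz : y - z = (x - z) - α • g x := by rw [hy]; abel
    rw [hyz, norm_sub_sq_real, real_inner_smul_right, norm_smul, mul_pow,
      Real.norm_eq_abs, sq_abs, real_inner_comm]
    ring
  have hzx : ⟪g x, z - x⟫ = -⟪g x, x - z⟫ := by
    rw [← inner_neg_right]; congr 1; abel
  rw [hzx] at hconv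
  have hgn : (0:ℝ) ≤ ‖g x‖ ^ 2 := sq_nonneg _
  have hfy : f y ≤ f x - (α / 2) * ‖g x‖ ^ 2 := by
    rw [hinn, hnyx] at hdesc
    nlinarith
  have hrhs : (1 / (2 * α)) * (‖x - z‖ ^ 2 - ‖y - z‖ ^ 2)
      = ⟪g x, x - z⟫ - (α / 2) * ‖g x‖ ^ 2 := by
    rw [hnorm]; field_simp; ring
  rw [hrhs]
  linarith

end helpers

/-- Static regret of the EUPMU iterates (paper's Appendix lemma
for Theorem 2): with `ℓ_u, ℓ_r` convex, differentiable and `G`-smooth,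
`|ℓ_r| ≤ B`, `λ_i ∈ [0, D]` with `|λ_{i+1} − λ_i| ≤ β_i(GL + ε_i)`,
`α(1+D)G ≤ 1`, and `θ_{i+1} = θ_i − α∇C_{λ_i}(θ_i)` where
`C_λ(θ) = ℓ_u(θ) + λ ℓ_r(θ)`, for every `θ*`:
`Σ_{i=1}^t C_{λ_i}(θ_i) − Σ_{i=1}^t C_{λ_i}(θ*)
  ≤ B Σ_{i=0}^{t−1} β_i(GL + ε_i) + ‖θ_0 − θ*‖²/(2α) + DB`. -/
theorem eupmu_static_regret {n : ℕ}
    (ℓu ℓr : EuclideanSpace ℝ (Fin n) → ℝ)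
    (gu gr : EuclideanSpace ℝ (Fin n) → EuclideanSpace ℝ (Fin n))
    (G L B D : ℝ) (hD : 0 < D)
    (hcu : ConvexOn ℝ Set.univ ℓu) (hcr : ConvexOn ℝ Set.univ ℓr)
    (hu : ∀ x, HasGradientAt ℓu (gu x) x)
    (hr : ∀ x, HasGradientAt ℓr (gr x) x)
    (hGu : ∀ x y, ‖gu x - gu y‖ ≤ G * ‖x - y‖)
    (hGr : ∀ x y, ‖gr x - gr y‖ ≤ G * ‖x - y‖)
    (hB : ∀ x, |ℓr x| ≤ B)
    (t : ℕ) (ht : 1 ≤ t) (lam β ε : ℕ → ℝ)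
    (hlam : ∀ i ≤ t, lam i ∈ Set.Icc (0 : ℝ) D)
    (hβ : ∀ i < t, 0 ≤ β i) (hε : ∀ i < t, 0 ≤ ε i)
    (hlamstep : ∀ i < t, |lam (i + 1) - lam i| ≤ β i * (G * L + ε i))
    (α : ℝ) (hα : 0 < α) (hαG : α * (1 + D) * G ≤ 1)
    (θ : ℕ → EuclideanSpace ℝ (Fin n))
    (hupd : ∀ i < t, θ (i + 1) = θ i - α • (gu (θ i) + lam i • gr (θ i))) :
    ∀ θstar : EuclideanSpace ℝ (Fin n),
      ∑ i ∈ Finset.Icc 1 t, (ℓu (θ i) + lam i * ℓr (θ i))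
          - ∑ i ∈ Finset.Icc 1 t, (ℓu θstar + lam i * ℓr θstar)
        ≤ B * ∑ i ∈ Finset.range t, β i * (G * L + ε i)
          + (1 / (2 * α)) * ‖θ 0 - θstar‖ ^ 2 + D * B := by
  intro θstar
  have hB0 : 0 ≤ B := (abs_nonneg _).trans (hB 0)
  have hstep_nonneg : ∀ i < t, 0 ≤ β i * (G * L + ε i) :=
    fun i hi => (abs_nonneg _).trans (hlamstep i hi)
  have hS : 0 ≤ ∑ i ∈ Finset.range t, β i * (G * L + ε i) :=
    Finset.sum_nonneg fun i hi => hstep_nonneg i (Finset.mem_range.1 hi)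
  rcases subsingleton_or_nontrivial (EuclideanSpace ℝ (Fin n)) with hsub | hnt
  · have hLHS : ∀ i, ℓu (θ i) + lam i * ℓr (θ i) = ℓu θstar + lam i * ℓr θstar := by
      intro i; rw [Subsingleton.elim (θ i) θstar]
    rw [show ∑ i ∈ Finset.Icc 1 t, (ℓu (θ i) + lam i * ℓr (θ i))
        = ∑ i ∈ Finset.Icc 1 t, (ℓu θstar + lam i * ℓr θstar) from
      Finset.sum_congr rfl fun i _ => hLHS i, sub_self]
    have h1 : 0 ≤ (1 / (2 * α)) * ‖θ 0 - θstar‖ ^ 2 := by positivity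
    have h2 : 0 ≤ B * ∑ i ∈ Finset.range t, β i * (G * L + ε i) := mul_nonneg hB0 hS
    have h3 : 0 ≤ D * B := mul_nonneg hD.le hB0
    linarith
  · -- G ≥ 0
    obtain ⟨a, b, hab⟩ := exists_pair_ne (EuclideanSpace ℝ (Fin n))
    have habn : 0 < ‖a - b‖ := by
      rw [norm_pos_iff]; exact sub_ne_zero.mpr hab
    have hG : 0 ≤ G := by
      nlinarith [hGu a b, norm_nonneg (gu a - gu b)]
    -- composite function facts
    set Cf : ℕ → EuclideanSpace ℝ (Fin n) → ℝ := fun i x => ℓu x + lam i * ℓr x with hCf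
    set gf : ℕ → EuclideanSpace ℝ (Fin n) → EuclideanSpace ℝ (Fin n) :=
      fun i x => gu x + lam i • gr x with hgf
    have hstep : ∀ i < t, Cf i (θ (i+1)) - Cf i θstar
        ≤ (1 / (2 * α)) * (‖θ i - θstar‖ ^ 2 - ‖θ (i+1) - θstar‖ ^ 2) := by
      intro i hi
      obtain ⟨hl0, hlD⟩ := hlam i hi.le
      have hconv : ConvexOn ℝ Set.univ (Cf i) := hcu.add (hcr.smul hl0)
      have hgrad : ∀ x, HasGradientAt (Cf i) (gf i x) x := by
        intro x
        have hf : HasFDerivAt (Cf i)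
            ((InnerProductSpace.toDual ℝ _) (gf i x)) x := by
          rw [hgf]
          simp only [map_add, map_smul]
          exact (hu x).hasFDerivAt.add (((hr x).hasFDerivAt).const_mul (lam i))
        exact hasGradientAt_iff_hasFDerivAt.2 hf
      have hLip : ∀ a b, ‖gf i a - gf i b‖ ≤ ((1 + D) * G) * ‖a - b‖ := by
        intro a b
        have h1 : gf i a - gf i b = (gu a - gu b) + lam i • (gr a - gr b) := by
          simp only [gf, smul_sub]; abel
        rw [h1]
        calc ‖(gu a - gu b) + lam i • (gr a - gr b)‖
            ≤ ‖gu a - gu b‖ + ‖lam i • (gr a - gr b)‖ := norm_add_le _ _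
          _ = ‖gu a - gu b‖ + lam i * ‖gr a - gr b‖ := by
              rw [norm_smul, Real.norm_eq_abs, abs_of_nonneg hl0]
          _ ≤ ((1 + D) * G) * ‖a - b‖ := by
              have h2 := hGu a b
              have h3 := hGr a b
              have h4 : lam i * ‖gr a - gr b‖ ≤ lam i * (G * ‖a - b‖) :=
                mul_le_mul_of_nonneg_left h3 hl0
              nlinarith [norm_nonneg (a - b), mul_nonneg hG (norm_nonneg (a - b))]
      have hCα : ((1 + D) * G) * α ≤ 1 := by nlinarith
      exact step_bound (Cf i) (gf i) ((1 + D) * G) α hα hCα hconv hgrad hLip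
        (θ i) (θ (i+1)) θstar (by rw [hupd i hi])
    -- telescoping sum of step bounds
    have hkey : ∑ i ∈ Finset.range t, (Cf i (θ (i+1)) - Cf i θstar)
        ≤ (1 / (2 * α)) * ‖θ 0 - θstar‖ ^ 2 := by
      calc ∑ i ∈ Finset.range t, (Cf i (θ (i+1)) - Cf i θstar)
          ≤ ∑ i ∈ Finset.range t,
            (1 / (2 * α)) * (‖θ i - θstar‖ ^ 2 - ‖θ (i+1) - θstar‖ ^ 2) :=
            Finset.sum_le_sum fun i hi => hstep i (Finset.mem_range.1 hi)
        _ = (1 / (2 * α)) * (‖θ 0 - θstar‖ ^ 2 - ‖θ t - θstar‖ ^ 2) := by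
            rw [← Finset.mul_sum, Finset.sum_range_sub' (fun i => ‖θ i - θstar‖ ^ 2)]
        _ ≤ (1 / (2 * α)) * ‖θ 0 - θstar‖ ^ 2 := by
            have : 0 ≤ ‖θ t - θstar‖ ^ 2 := sq_nonneg _
            have hpos : 0 < 1 / (2 * α) := by positivity
            nlinarith
    -- rewrite LHS
    have hLHS : ∑ i ∈ Finset.Icc 1 t, (ℓu (θ i) + lam i * ℓr (θ i))
          - ∑ i ∈ Finset.Icc 1 t, (ℓu θstar + lam i * ℓr θstar)
        = ∑ i ∈ Finset.range t, (Cf i (θ (i+1)) - Cf i θstar)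
          + ∑ i ∈ Finset.range t, (lam (i+1) - lam i) * ℓr (θ (i+1))
          - ∑ i ∈ Finset.range t, (lam (i+1) - lam i) * ℓr θstar := by
      rw [← Finset.Ico_add_one_right_eq_Icc, Finset.sum_Ico_eq_sum_range, Finset.sum_Ico_eq_sum_range,
        ← Finset.sum_sub_distrib, ← Finset.sum_add_distrib, ← Finset.sum_sub_distrib]
      simp only [Nat.add_sub_cancel]
      refine Finset.sum_congr rfl fun i _ => ?_
      rw [add_comm 1 i]
      simp only [Cf]
      ring
    have h2 : ∑ i ∈ Finset.range t, (lam (i+1) - lam i) * ℓr (θ (i+1))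
        ≤ B * ∑ i ∈ Finset.range t, β i * (G * L + ε i) := by
      rw [Finset.mul_sum]
      refine Finset.sum_le_sum fun i hi => ?_
      have hi' := Finset.mem_range.1 hi
      calc (lam (i+1) - lam i) * ℓr (θ (i+1))
          ≤ |lam (i+1) - lam i| * |ℓr (θ (i+1))| := by
            rw [← abs_mul]; exact le_abs_self _
        _ ≤ (β i * (G * L + ε i)) * B :=
            mul_le_mul (hlamstep i hi') (hB _) (abs_nonneg _) (hstep_nonneg i hi')
        _ = B * (β i * (G * L + ε i)) := by ring
    have h3 : -∑ i ∈ Finset.range t, (lam (i+1) - lam i) * ℓr θstar ≤ D * B := by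
      rw [← Finset.sum_mul, Finset.sum_range_sub (fun i => lam i)]
      have hd : |lam t - lam 0| ≤ D := by
        obtain ⟨h1, h2'⟩ := hlam t le_rfl
        obtain ⟨h3', h4⟩ := hlam 0 (Nat.zero_le t)
        rw [abs_sub_le_iff]; constructor <;> linarith
      calc -((lam t - lam 0) * ℓr θstar)
          ≤ |(lam t - lam 0) * ℓr θstar| := neg_le_abs _
        _ = |lam t - lam 0| * |ℓr θstar| := abs_mul _ _
        _ ≤ D * B := mul_le_mul hd (hB _) (abs_nonneg _) (by linarith)
    rw [hLHS]
    linarith
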